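/- Let {S₀, S₁} be a splitting of n over F_{q²} with even-like duadic codes Cᵢ and odd-like duadic codes Dᵢ. Then the Hermitian dual satisfies Cᵢ^⊥h = Dᵢ if and only if -qSᵢ ≡ S_{(i+1 mod 2)} (mod n) for i = 0,1. -/

import Mathlib

set_option linter.unusedSectionVars false

/-- The cyclic code of length `n` over `F` with defining set `T ⊆ ℤ/nℤ`, relative to a
fixed primitive `n`-th root of unity `α` in an extension field `E` (embedding `f`). -/
def cyclicCode (n : ℕ) [NeZero n] {F E : Type*} [Field F] [Field E]
    (f : F →+* E) (α : E) (T : Set (ZMod n)) : Set (ZMod n → F) :=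
  {c | ∀ j ∈ T, ∑ i : ZMod n, f (c i) * α ^ (j * i).val = 0}

/-- The Hermitian dual of a code `C ⊆ F_{q²}^n`, with respect to the Hermitian inner
product `⟨u,v⟩ = ∑ᵢ uᵢ vᵢ^q`. -/
def hermDual (n q : ℕ) [NeZero n] {F : Type*} [Field F] (C : Set (ZMod n → F)) :
    Set (ZMod n → F) :=
  {u | ∀ c ∈ C, ∑ i : ZMod n, u i * (c i) ^ q = 0}

noncomputable section DuadicAux
open Finset Polynomial

namespace Duadic

variable {n : ℕ} [NeZero n] {F E : Type*} [Field F] [Field E]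

def ee (α : E) (x : ZMod n) : E := α ^ x.val

lemma pow_mod (α : E) (hα : orderOf α = n) (a : ℕ) : α ^ (a % n) = α ^ a := by
  conv_lhs => rw [← hα]
  exact pow_mod_orderOf α a

lemma ee_natCast (α : E) (hα : orderOf α = n) (a : ℕ) : ee α (a : ZMod n) = α ^ a := by
  rw [ee, ZMod.val_natCast, pow_mod α hα]

lemma ee_add (α : E) (hα : orderOf α = n) (x y : ZMod n) :
    ee α (x + y) = ee α x * ee α y := by
  rw [ee, ZMod.val_add, pow_mod α hα, pow_add]; rfl

lemma ee_pow (α : E) (hα : orderOf α = n) (x : ZMod n) (m : ℕ) :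
    ee α x ^ m = ee α ((m : ZMod n) * x) := by
  have h1 : ((m : ZMod n) * x) = ((x.val * m : ℕ) : ZMod n) := by
    push_cast
    rw [ZMod.natCast_val, ZMod.cast_id]
    ring
  rw [h1, ee_natCast α hα, ee, ← pow_mul]

lemma ee_zero (α : E) : ee α (0 : ZMod n) = 1 := by
  simp [ee, ZMod.val_zero]

lemma alpha_ne_zero (α : E) (hα : orderOf α = n) : α ≠ 0 := by
  intro h0
  have h1 : α ^ n = 1 := by rw [← hα]; exact pow_orderOf_eq_one α
  rw [h0, zero_pow (NeZero.ne n)] at h1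
  exact zero_ne_one h1

lemma pow_val_inj (α : E) (hα : orderOf α = n) {x y : ZMod n}
    (h : α ^ x.val = α ^ y.val) : x = y := by
  have key : ∀ a b : ZMod n, a.val ≤ b.val → α ^ a.val = α ^ b.val → a = b := by
    intro a b hab h'
    have hne : α ^ a.val ≠ 0 := pow_ne_zero _ (alpha_ne_zero α hα)
    have h2 : α ^ a.val * α ^ (b.val - a.val) = α ^ a.val * 1 := by
      rw [← pow_add, Nat.add_sub_cancel' hab, ← h', mul_one]
    have h3 : α ^ (b.val - a.val) = 1 := mul_left_cancel₀ hne h2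
    have h4 : n ∣ b.val - a.val := by
      have := orderOf_dvd_of_pow_eq_one h3
      rwa [hα] at this
    have h5 : b.val - a.val = 0 :=
      Nat.eq_zero_of_dvd_of_lt h4 (lt_of_le_of_lt (Nat.sub_le _ _) (ZMod.val_lt b)) 
    have h6 : b.val = a.val := Nat.le_antisymm (Nat.le_of_sub_eq_zero h5) hab
    exact (ZMod.val_injective n h6).symm
  rcases le_total x.val y.val with hle | hle
  · exact key x y hle h
  · exact (key y x hle h.symm).symm

lemma ee_inj (α : E) (hα : orderOf α = n) {x y : ZMod n} (h : ee α x = ee α y) : x = y :=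
  pow_val_inj α hα h

lemma sum_ee (α : E) (hα : orderOf α = n) (x : ZMod n) :
    ∑ i : ZMod n, ee α (x * i) = if x = 0 then (n : E) else 0 := by
  by_cases hx : x = 0
  · simp [hx, ee_zero, ZMod.card]
  · rw [if_neg hx]
    have hsummand : ∀ i : ZMod n, ee α (x * i) = (α ^ x.val) ^ i.val := by
      intro i
      rw [ee, ZMod.val_mul, pow_mod α hα, pow_mul]
    simp only [hsummand]
    set β : E := α ^ x.val with hβ
    have hre : ∑ i : ZMod n, β ^ i.val = ∑ j ∈ Finset.range n, β ^ j := by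
      apply Finset.sum_nbij' (fun i : ZMod n => i.val) (fun j : ℕ => (j : ZMod n))
      · intro i _; exact Finset.mem_range.2 (ZMod.val_lt i)
      · intro j _; exact Finset.mem_univ _
      · intro i _; rw [ZMod.natCast_val, ZMod.cast_id]
      · intro j hj; exact ZMod.val_natCast_of_lt (Finset.mem_range.1 hj)
      · intro i _; rfl
    rw [hre]
    have hβ1 : β ≠ 1 := by
      intro h1
      have hdvd : n ∣ x.val := by
        have h1' : α ^ x.val = 1 := hβ ▸ h1
        have := orderOf_dvd_of_pow_eq_one h1'
        rwa [hα] at this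
      have hv0 : x.val = 0 := Nat.eq_zero_of_dvd_of_lt hdvd (ZMod.val_lt x)
      exact hx ((ZMod.val_eq_zero x).1 hv0)
    have hβn : β ^ n = 1 := by
      have : α ^ n = 1 := by rw [← hα]; exact pow_orderOf_eq_one α
      rw [hβ, ← pow_mul, mul_comm, pow_mul, this, one_pow]
    rw [geom_sum_eq hβ1, hβn, sub_self, zero_div]

def dft (f : F →+* E) (α : E) (c : ZMod n → F) (j : ZMod n) : E :=
  ∑ i : ZMod n, f (c i) * ee α (j * i)


section Main

variable [Fintype F] {q p e : ℕ}

lemma charF (hp : p.Prime) (he : 0 < e) (hpe : p ^ e = q)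
    (hcard : Fintype.card F = q ^ 2) : CharP F p := by
  obtain ⟨p', hp'⟩ := CharP.exists F
  haveI := hp'
  have hp'prime : p'.Prime := CharP.char_is_prime F p'
  obtain ⟨m, -, hm⟩ := FiniteField.card F p'
  have h1 : p' ^ (m : ℕ) = p ^ (e * 2) := by rw [← hm, hcard, ← hpe, ← pow_mul]
  have hdvd : p ∣ p' ^ (m : ℕ) := by
    rw [h1]; exact dvd_pow_self p (by positivity)
  have h2 : p ∣ p' := hp.dvd_of_dvd_pow hdvd
  have h3 : p = p' := (Nat.prime_dvd_prime_iff_eq hp hp'prime).1 h2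
  rwa [h3]

lemma natCast_pow_p (m : ℕ) [CharP E p] (hp : p.Prime) (k : ℕ) :
    ((m : E)) ^ (p ^ k) = (m : E) := by
  haveI : Fact p.Prime := ⟨hp⟩
  have := map_natCast (iterateFrobenius E p k) m
  rwa [iterateFrobenius_def] at this

lemma fE_pow (f : F →+* E) (hcard : Fintype.card F = q ^ 2) (a : F) :
    f a ^ (q ^ 2) = f a := by
  rw [← map_pow, ← hcard, FiniteField.pow_card]

lemma frange (f : F →+* E) (hq2 : 2 ≤ q) (hcard : Fintype.card F = q ^ 2)
    (x : E) (hx : x ^ (q ^ 2) = x) : ∃ a : F, f a = x := by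
  by_contra hno
  push_neg at hno
  set P : E[X] := X ^ (q ^ 2) - X with hP
  have hq21 : 1 < q ^ 2 := by nlinarith
  have hdeg : P.natDegree ≤ q ^ 2 := by
    refine le_trans (natDegree_sub_le _ _) ?_
    rw [natDegree_X_pow, natDegree_X]
    omega
  have hroot : ∀ y : E, y ^ (q ^ 2) = y → P.eval y = 0 := by
    intro y hy; simp [hP, hy]
  have hPne : P ≠ 0 := by
    intro h0
    have hc : P.coeff (q ^ 2) = 1 := by
      rw [hP, coeff_sub, coeff_X_pow, if_pos rfl, Polynomial.coeff_X,
        if_neg (show ¬1 = q ^ 2 by omega), sub_zero]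
    rw [h0, coeff_zero] at hc
    exact zero_ne_one hc
  classical
  set D : Finset E := insert x (Finset.univ.image (fun a : F => f a)) with hD
  have hsub : D ⊆ P.roots.toFinset := by
    intro y hy
    rw [Multiset.mem_toFinset, mem_roots hPne]
    rcases Finset.mem_insert.1 hy with rfl | hy
    · exact hroot y hx
    · obtain ⟨a, -, rfl⟩ := Finset.mem_image.1 hy
      exact hroot _ (fE_pow f hcard a)
  have hxnot : x ∉ Finset.univ.image (fun a : F => f a) := by
    intro hx'
    obtain ⟨a, -, ha⟩ := Finset.mem_image.1 hx'
    exact hno a ha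
  have hcD : D.card = q ^ 2 + 1 := by
    rw [hD, Finset.card_insert_of_notMem hxnot,
      Finset.card_image_of_injective _ f.injective, Finset.card_univ, hcard]
  have hle := (Finset.card_le_card hsub).trans
    ((Multiset.toFinset_card_le _).trans (P.card_roots'.trans hdeg))
  omega

variable {n : ℕ} [NeZero n]

lemma dft_conj [CharP E p] (hp : p.Prime) (he : 0 < e) (hpe : p ^ e = q)
    (hcard : Fintype.card F = q ^ 2) (f : F →+* E) (α : E) (hα : orderOf α = n)
    (c : ZMod n → F) (j : ZMod n) :
    dft f α c (((q : ZMod n) ^ 2) * j) = dft f α c j ^ (q ^ 2) := by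
  haveI : Fact p.Prime := ⟨hp⟩
  have hq2 : q ^ 2 = p ^ (e * 2) := by rw [← hpe, ← pow_mul]
  rw [dft, dft, hq2, sum_pow_char_pow]
  apply Finset.sum_congr rfl
  intro i _
  rw [mul_pow, ← hq2, fE_pow f hcard, ee_pow α hα]
  congr 2
  push_cast
  ring

lemma dft_conj_pow [CharP E p] (hp : p.Prime) (he : 0 < e) (hpe : p ^ e = q)
    (hcard : Fintype.card F = q ^ 2) (f : F →+* E) (α : E) (hα : orderOf α = n)
    (c : ZMod n → F) (j : ZMod n) (t : ℕ) :
    dft f α c ((((q : ZMod n) ^ 2) ^ t) * j) = dft f α c j ^ ((q ^ 2) ^ t) := by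
  induction t with
  | zero => simp
  | succ t ih =>
    have h1 : (((q : ZMod n) ^ 2) ^ (t + 1)) * j = ((q : ZMod n) ^ 2) * ((((q : ZMod n) ^ 2) ^ t) * j) := by
      ring
    rw [h1, dft_conj hp he hpe hcard f α hα, ih, ← pow_mul, ← pow_succ]

lemma sum_unit_mul (u : (ZMod n)ˣ) (g : ZMod n → E) :
    ∑ k : ZMod n, g ((u : ZMod n) * k) = ∑ k : ZMod n, g k := by
  apply Fintype.sum_equiv (MulAction.toPerm u)
  intro k
  simp [MulAction.toPerm_apply, Units.smul_def]

lemma parseval [CharP E p] (hp : p.Prime) (he : 0 < e) (hpe : p ^ e = q)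
    (hcard : Fintype.card F = q ^ 2) (hco : Nat.Coprime n q)
    (f : F →+* E) (α : E) (hα : orderOf α = n) (u c : ZMod n → F) :
    ∑ k : ZMod n, dft f α u (-(q : ZMod n) * k) * (dft f α c k) ^ q
      = (n : E) * f (∑ i : ZMod n, u i * c i ^ q) := by
  haveI : Fact p.Prime := ⟨hp⟩
  have hqu : IsUnit ((q : ZMod n)) := (ZMod.isUnit_iff_coprime q n).2 hco.symm
  have hBk : ∀ k : ZMod n, (dft f α c k) ^ q
      = ∑ i' : ZMod n, f (c i' ^ q) * ee α ((q : ZMod n) * (k * i')) := by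
    intro k
    rw [dft, ← hpe, sum_pow_char_pow]
    apply Finset.sum_congr rfl
    intro i' _
    rw [mul_pow, hpe, ← map_pow, ee_pow α hα]
  simp only [hBk]
  simp only [dft]
  simp only [Finset.sum_mul_sum]
  rw [Finset.sum_comm]
  have key : ∀ i i' : ZMod n,
      ∑ k : ZMod n, (f (u i) * ee α ((-(q : ZMod n) * k) * i)) * (f (c i' ^ q) * ee α ((q : ZMod n) * (k * i')))
      = f (u i) * f (c i' ^ q) * (if i' = i then (n : E) else 0) := by
    intro i i'
    have h1 : ∀ k : ZMod n,
        (f (u i) * ee α ((-(q : ZMod n) * k) * i)) * (f (c i' ^ q) * ee α ((q : ZMod n) * (k * i')))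
        = (f (u i) * f (c i' ^ q)) * ee α (((q : ZMod n) * (i' - i)) * k) := by
      intro k
      have h2 : (-(q : ZMod n) * k) * i + (q : ZMod n) * (k * i') = ((q : ZMod n) * (i' - i)) * k := by
        ring
      rw [mul_mul_mul_comm, ← ee_add α hα, h2]
    simp only [h1]
    rw [← Finset.mul_sum, sum_ee α hα]
    congr 1
    by_cases h : i' = i
    · rw [if_pos h, if_pos (by rw [h, sub_self, mul_zero])]
    · rw [if_neg h, if_neg]
      intro h0
      exact h (sub_eq_zero.mp (hqu.mul_right_eq_zero.mp h0))
  calc ∑ i : ZMod n, ∑ k : ZMod n, ∑ i' : ZMod n,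
        (f (u i) * ee α ((-(q : ZMod n) * k) * i)) * (f (c i' ^ q) * ee α ((q : ZMod n) * (k * i')))
      = ∑ i : ZMod n, ∑ i' : ZMod n, ∑ k : ZMod n,
        (f (u i) * ee α ((-(q : ZMod n) * k) * i)) * (f (c i' ^ q) * ee α ((q : ZMod n) * (k * i'))) := by
        exact Finset.sum_congr rfl fun i _ => Finset.sum_comm
    _ = ∑ i : ZMod n, ∑ i' : ZMod n, f (u i) * f (c i' ^ q) * (if i' = i then (n : E) else 0) := by
        exact Finset.sum_congr rfl fun i _ => Finset.sum_congr rfl fun i' _ => key i i'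
    _ = ∑ i : ZMod n, f (u i) * f (c i ^ q) * (n : E) := by
        refine Finset.sum_congr rfl fun i _ => ?_
        rw [Finset.sum_eq_single i]
        · rw [if_pos rfl]
        · intro i' _ hne
          rw [if_neg hne, mul_zero]
        · intro habs
          exact absurd (Finset.mem_univ i) habs
    _ = (n : E) * f (∑ i : ZMod n, u i * c i ^ q) := by
        rw [map_sum]
        rw [Finset.mul_sum]
        refine Finset.sum_congr rfl fun i _ => ?_
        rw [map_mul, map_pow]
        ring

lemma mem_cyclicCode {T : Set (ZMod n)} {c : ZMod n → F} (f : F →+* E) (α : E) :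
    c ∈ cyclicCode n f α T ↔ ∀ j ∈ T, dft f α c j = 0 := Iff.rfl

lemma exists_codeword [CharP E p] (hp : p.Prime) (he : 0 < e) (hpe : p ^ e = q)
    (hcard : Fintype.card F = q ^ 2) (hco : Nat.Coprime n q) (hq2 : 2 ≤ q)
    (hn0 : (n : E) ≠ 0)
    (f : F →+* E) (α : E) (hα : orderOf α = n)
    (v : ZMod n → E) (hv : ∀ j, v (((q : ZMod n) ^ 2) * j) = v j ^ (q ^ 2)) :
    ∃ c : ZMod n → F, ∀ j, dft f α c j = v j := by
  haveI : Fact p.Prime := ⟨hp⟩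
  have hqu : IsUnit ((q : ZMod n)) := (ZMod.isUnit_iff_coprime q n).2 hco.symm
  have hQu : IsUnit ((q : ZMod n) ^ 2) := hqu.pow 2
  set w : ZMod n → E := fun i => (n : E)⁻¹ * ∑ j : ZMod n, v j * ee α (-(i * j)) with hw
  have hwfix : ∀ i, w i ^ (q ^ 2) = w i := by
    intro i
    have hq2p : q ^ 2 = p ^ (e * 2) := by rw [← hpe, ← pow_mul]
    rw [hw]
    simp only
    rw [mul_pow]
    have h1 : ((n : E)⁻¹) ^ (q ^ 2) = (n : E)⁻¹ := by
      rw [inv_pow, hq2p, natCast_pow_p n hp (e * 2)]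
    rw [h1]
    congr 1
    rw [hq2p, sum_pow_char_pow]
    have h2 : ∀ j : ZMod n, (v j * ee α (-(i * j))) ^ (p ^ (e * 2))
        = v (((q : ZMod n) ^ 2) * j) * ee α (-(i * (((q : ZMod n) ^ 2) * j))) := by
      intro j
      rw [mul_pow, ← hq2p, ← hv j, ee_pow α hα]
      congr 2
      push_cast
      ring
    simp only [h2]
    have h5 := sum_unit_mul (hQu.unit) (fun k => v k * ee α (-(i * k)))
    rw [hQu.unit_spec] at h5
    exact h5
  have hwF : ∀ i, ∃ a : F, f a = w i := fun i => frange f hq2 hcard (w i) (hwfix i)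
  choose c hc using hwF
  refine ⟨c, fun j => ?_⟩
  rw [dft]
  simp only [hc]
  rw [hw]
  simp only
  have h3 : ∀ i : ZMod n, ((n : E)⁻¹ * ∑ k : ZMod n, v k * ee α (-(i * k))) * ee α (j * i)
      = (n : E)⁻¹ * ∑ k : ZMod n, v k * ee α ((j - k) * i) := by
    intro i
    rw [mul_assoc, Finset.sum_mul]
    congr 1
    refine Finset.sum_congr rfl fun k _ => ?_
    rw [mul_assoc, ← ee_add α hα]
    congr 2
    ring
  simp only [h3]
  rw [← Finset.mul_sum, Finset.sum_comm]
  have h4 : ∀ k : ZMod n, ∑ i : ZMod n, v k * ee α ((j - k) * i)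
      = v k * (if j - k = 0 then (n : E) else 0) := by
    intro k
    rw [← Finset.mul_sum, sum_ee α hα]
  simp only [h4]
  rw [Finset.sum_eq_single j]
  · rw [if_pos (sub_self j)]
    field_simp
  · intro k _ hk
    rw [if_neg (fun h => hk (sub_eq_zero.mp h).symm), mul_zero]
  · intro h; exact absurd (Finset.mem_univ j) h

lemma orbit_back (hco : Nat.Coprime n q) :
    ∃ m : ℕ, 0 < m ∧ ∀ x : ZMod n, (((q : ZMod n)) ^ 2) ^ m * x = x := by
  have hqu : IsUnit ((q : ZMod n)) := (ZMod.isUnit_iff_coprime q n).2 hco.symm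
  have hQu : IsUnit ((q : ZMod n) ^ 2) := hqu.pow 2
  refine ⟨orderOf hQu.unit, orderOf_pos hQu.unit, fun x => ?_⟩
  have h1 : ((q : ZMod n) ^ 2) ^ orderOf hQu.unit = 1 := by
    have h2 := pow_orderOf_eq_one hQu.unit
    have h3 := congrArg (Units.val) h2
    rw [Units.val_pow_eq_pow_val, hQu.unit_spec, Units.val_one] at h3
    exact h3
  rw [h1, one_mul]

lemma orbit_preimage (hco : Nat.Coprime n q) {k₀ j : ZMod n}
    (h : ∃ t : ℕ, (((q : ZMod n)) ^ 2) ^ t * k₀ = ((q : ZMod n)) ^ 2 * j) :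
    ∃ t : ℕ, (((q : ZMod n)) ^ 2) ^ t * k₀ = j := by
  obtain ⟨m, hm0, hmx⟩ := orbit_back (n := n) hco
  obtain ⟨t, ht⟩ := h
  refine ⟨m - 1 + t, ?_⟩
  have h1 : (((q : ZMod n)) ^ 2) ^ (m - 1 + t) * k₀
      = (((q : ZMod n)) ^ 2) ^ (m - 1) * ((((q : ZMod n)) ^ 2) ^ t * k₀) := by
    rw [pow_add, mul_assoc]
  rw [h1, ht, ← mul_assoc, ← pow_succ, Nat.sub_add_cancel hm0]
  exact hmx j

lemma Tclosed_mem (hco : Nat.Coprime n q) {T : Set (ZMod n)}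
    (hT : (fun x => ((q : ZMod n)) ^ 2 * x) '' T = T) (x : ZMod n) :
    ((q : ZMod n)) ^ 2 * x ∈ T ↔ x ∈ T := by
  have hqu : IsUnit ((q : ZMod n)) := (ZMod.isUnit_iff_coprime q n).2 hco.symm
  have hQu : IsUnit ((q : ZMod n) ^ 2) := hqu.pow 2
  constructor
  · intro hx
    rw [← hT] at hx
    obtain ⟨y, hy, hxy⟩ := hx
    rwa [← hQu.mul_right_inj.mp hxy]
  · intro hx
    rw [← hT]
    exact ⟨x, hx, rfl⟩

lemma orbit_not_mem (hco : Nat.Coprime n q) {T : Set (ZMod n)}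
    (hT : (fun x => ((q : ZMod n)) ^ 2 * x) '' T = T) {k₀ : ZMod n} (hk₀ : k₀ ∉ T)
    (t : ℕ) : (((q : ZMod n)) ^ 2) ^ t * k₀ ∉ T := by
  induction t with
  | zero => simpa using hk₀
  | succ t ih =>
    intro h
    apply ih
    have h1 : (((q : ZMod n)) ^ 2) ^ (t + 1) * k₀
        = ((q : ZMod n)) ^ 2 * ((((q : ZMod n)) ^ 2) ^ t * k₀) := by
      rw [pow_succ]; ring
    rw [h1] at h
    exact (Tclosed_mem hco hT _).mp h

lemma not_mem_of_code_le [CharP E p] (hp : p.Prime) (he : 0 < e) (hpe : p ^ e = q)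
    (hcard : Fintype.card F = q ^ 2) (hco : Nat.Coprime n q) (hq2 : 2 ≤ q)
    (hn0 : (n : E) ≠ 0) (f : F →+* E) (α : E) (hα : orderOf α = n)
    {T T' : Set (ZMod n)} (hT : (fun x => ((q : ZMod n)) ^ 2 * x) '' T = T)
    (hsub : cyclicCode n f α T ⊆ cyclicCode n f α T')
    {k₀ : ZMod n} (hk₀ : k₀ ∉ T) : k₀ ∉ T' := by
  classical
  set v : ZMod n → E :=
    fun j => if ∃ t : ℕ, (((q : ZMod n)) ^ 2) ^ t * k₀ = j then 1 else 0 with hvdef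
  have hv : ∀ j, v (((q : ZMod n)) ^ 2 * j) = v j ^ (q ^ 2) := by
    intro j
    by_cases h : ∃ t : ℕ, (((q : ZMod n)) ^ 2) ^ t * k₀ = j
    · have h' : ∃ t : ℕ, (((q : ZMod n)) ^ 2) ^ t * k₀ = ((q : ZMod n)) ^ 2 * j := by
        obtain ⟨t, rfl⟩ := h
        refine ⟨t + 1, ?_⟩
        rw [pow_succ]; ring
      rw [hvdef]
      simp only [if_pos h, if_pos h', one_pow]
    · have h' : ¬ ∃ t : ℕ, (((q : ZMod n)) ^ 2) ^ t * k₀ = ((q : ZMod n)) ^ 2 * j :=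
        fun hc => h (orbit_preimage hco hc)
      rw [hvdef]
      simp only [if_neg h, if_neg h']
      rw [zero_pow (by positivity)]
  obtain ⟨c, hc⟩ := exists_codeword hp he hpe hcard hco hq2 hn0 f α hα v hv
  have hcT : c ∈ cyclicCode n f α T := by
    rw [mem_cyclicCode]
    intro j hj
    rw [hc, hvdef]
    simp only
    rw [if_neg]
    rintro ⟨t, rfl⟩
    exact orbit_not_mem hco hT hk₀ t hj
  intro hk₀'
  have h1 := (mem_cyclicCode f α).mp (hsub hcT) k₀ hk₀'
  rw [hc k₀] at h1
  have hex0 : ∃ t : ℕ, (((q : ZMod n)) ^ 2) ^ t * k₀ = k₀ := ⟨0, by simp⟩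
  simp only [hvdef, hex0, if_true] at h1
  exact one_ne_zero h1

lemma code_inj [CharP E p] (hp : p.Prime) (he : 0 < e) (hpe : p ^ e = q)
    (hcard : Fintype.card F = q ^ 2) (hco : Nat.Coprime n q) (hq2 : 2 ≤ q)
    (hn0 : (n : E) ≠ 0) (f : F →+* E) (α : E) (hα : orderOf α = n)
    {T T' : Set (ZMod n)} (hT : (fun x => ((q : ZMod n)) ^ 2 * x) '' T = T)
    (hT' : (fun x => ((q : ZMod n)) ^ 2 * x) '' T' = T')
    (h : cyclicCode n f α T = cyclicCode n f α T') : T = T' := by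
  apply Set.eq_of_subset_of_subset
  · intro x hx
    by_contra hx'
    exact (not_mem_of_code_le hp he hpe hcard hco hq2 hn0 f α hα hT' h.symm.le hx') hx
  · intro x hx
    by_contra hx'
    exact (not_mem_of_code_le hp he hpe hcard hco hq2 hn0 f α hα hT h.le hx') hx

lemma poly_vanish {QN r : ℕ} (hQN : 2 ≤ QN) (hr0 : 0 < r)
    (x : E) (K : Finset E) (hKcard : QN ^ r ≤ K.card)
    (hinj : Function.Injective (fun y : E => y ^ q))
    (hsum : ∀ γ ∈ K, ∑ t ∈ Finset.range r, x ^ (QN ^ t) * (γ ^ q) ^ (QN ^ t) = 0) :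
    x = 0 := by
  by_contra hx0
  classical
  set P : Polynomial E :=
    ∑ t ∈ Finset.range r, Polynomial.C (x ^ (QN ^ t)) * Polynomial.X ^ (QN ^ t) with hPdef
  have hPco : P.coeff 1 = x := by
    rw [hPdef, Polynomial.finset_sum_coeff]
    rw [Finset.sum_eq_single 0]
    · simp
    · intro t _ ht0
      rw [Polynomial.coeff_C_mul, Polynomial.coeff_X_pow, if_neg, mul_zero]
      have h1 : 1 < QN ^ t := Nat.one_lt_pow ht0 (by omega)
      omega
    · intro h; exact absurd (Finset.mem_range.mpr hr0) h
  have hPne : P ≠ 0 := fun h0 => hx0 (by rw [← hPco, h0, Polynomial.coeff_zero])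
  have hdegP : P.natDegree ≤ QN ^ (r - 1) := by
    rw [hPdef]
    refine Polynomial.natDegree_sum_le_of_forall_le _ _ ?_
    intro t ht
    refine le_trans (Polynomial.natDegree_C_mul_le _ _) ?_
    rw [Polynomial.natDegree_X_pow]
    exact Nat.pow_le_pow_right (by omega) (by
      have := Finset.mem_range.mp ht; omega)
  set D : Finset E := Finset.image (fun y => y ^ q) K with hD
  have hDsub : D ⊆ P.roots.toFinset := by
    intro y hy
    obtain ⟨γ, hγ, rfl⟩ := Finset.mem_image.mp hy
    rw [Multiset.mem_toFinset, Polynomial.mem_roots hPne]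
    have h2 := hsum γ hγ
    rw [Polynomial.IsRoot, hPdef, Polynomial.eval_finset_sum]
    simpa using h2
  have hDcard : QN ^ r ≤ D.card := by
    rw [hD, Finset.card_image_of_injective _ hinj]; exact hKcard
  have hfin := (Finset.card_le_card hDsub).trans
    ((Multiset.toFinset_card_le _).trans (P.card_roots'.trans hdegP))
  have hlt : QN ^ (r - 1) < QN ^ r := Nat.pow_lt_pow_right (by omega) (by omega)
  exact absurd (hDcard.trans hfin) (not_le.mpr hlt)

lemma adjoin_facts [CharP E p] (hp : p.Prime) (he : 0 < e) (hpe : p ^ e = q)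
    (hcard : Fintype.card F = q ^ 2) (f : F →+* E) (β : E) (hβd : β ^ n = 1)
    (r : ℕ) (hβfix : β ^ ((q ^ 2) ^ r) = β)
    (hmin : ∀ s : ℕ, 0 < s → β ^ ((q ^ 2) ^ s) = β → r ≤ s) :
    ∃ K : Finset E, (q ^ 2) ^ r ≤ K.card ∧ ∀ γ ∈ K, γ ^ ((q ^ 2) ^ r) = γ := by
  classical
  haveI : Fact p.Prime := ⟨hp⟩
  letI : Algebra F E := f.toAlgebra
  have halg : (algebraMap F E) = f := rfl
  have hq0 : 0 < q := by
    rw [← hpe]; exact Nat.pow_pos hp.pos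
  have hβint : IsIntegral F β := by
    refine ⟨Polynomial.X ^ n - Polynomial.C 1, Polynomial.monic_X_pow_sub_C 1 (NeZero.ne n), ?_⟩
    rw [Polynomial.eval₂_sub, Polynomial.eval₂_X_pow, Polynomial.eval₂_C, hβd, map_one, sub_self]
  haveI hKfd : FiniteDimensional F (IntermediateField.adjoin F {β}) :=
    IntermediateField.adjoin.finiteDimensional hβint
  haveI : Finite (IntermediateField.adjoin F {β}) := Module.finite_of_finite F
  haveI : Fintype (IntermediateField.adjoin F {β}) := Fintype.ofFinite _
  set s := Module.finrank F (IntermediateField.adjoin F {β}) with hs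
  have hcardK : Fintype.card (IntermediateField.adjoin F {β}) = (q ^ 2) ^ s := by
    rw [Module.card_eq_pow_finrank (K := F), hcard]
  have hspos : 0 < s := Module.finrank_pos
  have hβK : β ∈ IntermediateField.adjoin F {β} := IntermediateField.mem_adjoin_simple_self F β
  have hβcard : β ^ ((q ^ 2) ^ s) = β := by
    have h1 := FiniteField.pow_card (⟨β, hβK⟩ : IntermediateField.adjoin F {β})
    rw [hcardK] at h1
    have h2 := congrArg (Subtype.val) h1
    simpa using h2
  have hrs : r ≤ s := hmin s hspos hβcard
  have hexp : (q ^ 2) ^ r = p ^ (e * (2 * r)) := by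
    rw [← hpe, ← pow_mul, ← pow_mul]
  have hφf : ∀ a : F, f a ^ ((q ^ 2) ^ r) = f a := by
    intro a
    have haux : ∀ N : ℕ, f a ^ ((q ^ 2) ^ N) = f a := by
      intro N
      induction N with
      | zero => simp
      | succ N ih => rw [pow_succ, pow_mul, ih, fE_pow f hcard]
    exact haux r
  set φ : E →ₐ[F] E :=
    { toRingHom := iterateFrobenius E p (e * (2 * r)),
      commutes' := fun a => by
        show iterateFrobenius E p (e * (2 * r)) ((algebraMap F E) a) = (algebraMap F E) a
        rw [iterateFrobenius_def, ← hexp, halg]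
        exact hφf a } with hφ
  have hfix : ∀ x : E, x ∈ IntermediateField.adjoin F {β} → x ^ ((q ^ 2) ^ r) = x := by
    have heq : (IntermediateField.adjoin F {β}).toSubalgebra = Algebra.adjoin F {β} :=
      IntermediateField.adjoin_simple_toSubalgebra_of_isAlgebraic hβint.isAlgebraic
    intro x hx
    have hx' : x ∈ Algebra.adjoin F ({β} : Set E) := by
      rw [← heq]; exact hx
    have hle : Algebra.adjoin F ({β} : Set E) ≤ AlgHom.equalizer φ (AlgHom.id F E) := by
      apply Algebra.adjoin_le
      intro y hy
      rw [Set.mem_singleton_iff] at hy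
      subst hy
      show φ y = (AlgHom.id F E) y
      have h4 : φ y = iterateFrobenius E p (e * (2 * r)) y := rfl
      rw [h4, iterateFrobenius_def, ← hexp]
      exact hβfix
    have h2 := hle hx'
    have h3 : φ x = x := h2
    have h4 : φ x = iterateFrobenius E p (e * (2 * r)) x := rfl
    rw [h4, iterateFrobenius_def, ← hexp] at h3
    exact h3
  refine ⟨Finset.image (Subtype.val) (Finset.univ : Finset (IntermediateField.adjoin F {β})),
    ?_, ?_⟩
  · rw [Finset.card_image_of_injective _ Subtype.val_injective, Finset.card_univ, hcardK]
    exact Nat.pow_le_pow_right (by positivity) hrs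
  · intro γ hγ
    obtain ⟨γ', -, rfl⟩ := Finset.mem_image.mp hγ
    exact hfix _ γ'.2

lemma dual_eq [CharP E p] (hp : p.Prime) (he : 0 < e) (hpe : p ^ e = q)
    (hcard : Fintype.card F = q ^ 2) (hco : Nat.Coprime n q) (hq2 : 2 ≤ q)
    (hn0 : (n : E) ≠ 0) (f : F →+* E) (α : E) (hα : orderOf α = n)
    (T : Set (ZMod n)) (hT : (fun x => ((q : ZMod n)) ^ 2 * x) '' T = T) :
    hermDual n q (cyclicCode n f α T)
      = cyclicCode n f α ((fun x => -(q : ZMod n) * x) '' Tᶜ) := by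
  classical
  haveI : Fact p.Prime := ⟨hp⟩
  have hq0 : q ≠ 0 := by omega
  apply Set.eq_of_subset_of_subset
  · -- hard direction
    intro u hu
    rw [mem_cyclicCode]
    rintro j₀ ⟨k₀, hk₀, rfl⟩
    have hk₀' : k₀ ∉ T := hk₀
    obtain ⟨m, hm0, hmx⟩ := orbit_back (n := n) hco
    have hex : ∃ t : ℕ, 0 < t ∧ (((q : ZMod n)) ^ 2) ^ t * k₀ = k₀ := ⟨m, hm0, hmx k₀⟩
    set r := Nat.find hex with hrdef
    obtain ⟨hr0, hrk⟩ := Nat.find_spec hex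
    have hmulper : ∀ s : ℕ, (((q : ZMod n)) ^ 2) ^ (r * s) * k₀ = k₀ := by
      intro s
      induction s with
      | zero => simp
      | succ s ih => rw [Nat.mul_succ, pow_add, mul_assoc, hrk, ih]
    have hperiod : ∀ t : ℕ, ((((q : ZMod n)) ^ 2) ^ t * k₀ = k₀) ↔ r ∣ t := by
      intro t
      constructor
      · intro ht
        have hmod : (((q : ZMod n)) ^ 2) ^ (t % r) * k₀ = k₀ := by
          calc (((q : ZMod n)) ^ 2) ^ (t % r) * k₀
              = (((q : ZMod n)) ^ 2) ^ (t % r) * ((((q : ZMod n)) ^ 2) ^ (r * (t / r)) * k₀) := by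
                rw [hmulper]
            _ = (((q : ZMod n)) ^ 2) ^ (t % r + r * (t / r)) * k₀ := by
                rw [pow_add, mul_assoc]
            _ = (((q : ZMod n)) ^ 2) ^ t * k₀ := by
                congr 1
                rw [Nat.mod_add_div t r]
            _ = k₀ := ht
        by_cases hmr : t % r = 0
        · exact Nat.dvd_of_mod_eq_zero hmr
        · exfalso
          have hlt : t % r < r := Nat.mod_lt t hr0
          exact Nat.find_min hex hlt ⟨Nat.pos_of_ne_zero hmr, hmod⟩
      · rintro ⟨s, rfl⟩
        exact hmulper s
    have hqu : IsUnit ((q : ZMod n)) := (ZMod.isUnit_iff_coprime q n).2 hco.symm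
    have hQu : IsUnit (((q : ZMod n)) ^ 2) := hqu.pow 2
    have horbeq : ∀ a b : ℕ,
        ((((q : ZMod n)) ^ 2) ^ a * k₀ = (((q : ZMod n)) ^ 2) ^ b * k₀) ↔ a ≡ b [MOD r] := by
      have haux : ∀ a b : ℕ, b ≤ a →
          (((((q : ZMod n)) ^ 2) ^ a * k₀ = (((q : ZMod n)) ^ 2) ^ b * k₀) ↔ a ≡ b [MOD r]) := by
        intro a b hba
        have hsplit : (((q : ZMod n)) ^ 2) ^ a * k₀
            = (((q : ZMod n)) ^ 2) ^ b * ((((q : ZMod n)) ^ 2) ^ (a - b) * k₀) := by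
          rw [← mul_assoc, ← pow_add, Nat.add_sub_cancel' hba]
        constructor
        · intro h
          rw [hsplit] at h
          have hcan := (IsUnit.mul_right_inj (hQu.pow b)).mp h
          have hdvd := (hperiod _).mp hcan
          exact ((Nat.modEq_iff_dvd' hba).mpr hdvd).symm
        · intro h
          have hdvd : r ∣ a - b := (Nat.modEq_iff_dvd' hba).mp h.symm
          rw [hsplit, (hperiod _).mpr hdvd]
      intro a b
      rcases le_total b a with hle | hle
      · exact haux a b hle
      · rw [eq_comm]
        exact (haux b a hle).trans ⟨Nat.ModEq.symm, Nat.ModEq.symm⟩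
    set β : E := α ^ k₀.val with hβdef
    have hβee : β = ee α k₀ := rfl
    have hkey : ∀ t : ℕ, ((((q : ZMod n)) ^ 2) ^ t * k₀ = k₀) ↔ β ^ ((q ^ 2) ^ t) = β := by
      intro t
      have h1 : β ^ ((q ^ 2) ^ t) = ee α ((((q : ZMod n)) ^ 2) ^ t * k₀) := by
        rw [hβee, ee_pow α hα]
        congr 2
        push_cast
        ring
      constructor
      · intro h
        rw [h1, h, hβee]
      · intro h
        apply ee_inj α hα
        rw [← h1, h, hβee]
    have hβn1 : β ^ n = 1 := by
      have hα1 : α ^ n = 1 := by rw [← hα]; exact pow_orderOf_eq_one α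
      rw [hβdef, ← pow_mul, mul_comm, pow_mul, hα1, one_pow]
    have hβfix : β ^ ((q ^ 2) ^ r) = β := (hkey r).mp hrk
    have hmin : ∀ s : ℕ, 0 < s → β ^ ((q ^ 2) ^ s) = β → r ≤ s := by
      intro s hs hfix
      exact Nat.le_of_dvd hs ((hperiod s).mp ((hkey s).mpr hfix))
    obtain ⟨K, hKcard, hKfix⟩ := adjoin_facts hp he hpe hcard f β hβn1 r hβfix hmin
    have hγper : ∀ γ : E, γ ^ ((q ^ 2) ^ r) = γ →
        ∀ a b : ℕ, a ≡ b [MOD r] → γ ^ ((q ^ 2) ^ a) = γ ^ ((q ^ 2) ^ b) := by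
      intro γ hγ
      have haux : ∀ b k : ℕ, γ ^ ((q ^ 2) ^ (b + r * k)) = γ ^ ((q ^ 2) ^ b) := by
        intro b k
        induction k with
        | zero => simp
        | succ k ih =>
          have h1 : b + r * (k + 1) = r + (b + r * k) := by ring
          rw [h1, pow_add, pow_mul, hγ, ih]
      have haux2 : ∀ a b : ℕ, b ≤ a → a ≡ b [MOD r] →
          γ ^ ((q ^ 2) ^ a) = γ ^ ((q ^ 2) ^ b) := by
        intro a b hba hab
        obtain ⟨k, hk⟩ := (Nat.modEq_iff_dvd' hba).mp hab.symm
        have h2 : a = b + r * k := by omega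
        rw [h2, haux]
      intro a b hab
      rcases le_total b a with hle | hle
      · exact haux2 a b hle hab
      · exact (haux2 b a hle hab.symm).symm
    have hsum0 : ∀ γ : E, γ ^ ((q ^ 2) ^ r) = γ →
        ∑ t ∈ Finset.range r,
          (dft f α u (-(q : ZMod n) * k₀)) ^ ((q ^ 2) ^ t) * (γ ^ q) ^ ((q ^ 2) ^ t) = 0 := by
      intro γ hγ
      set v : ZMod n → E := fun j =>
        if h : ∃ t : ℕ, (((q : ZMod n)) ^ 2) ^ t * k₀ = j then γ ^ ((q ^ 2) ^ (Nat.find h))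
        else 0 with hvdef
      have hvval : ∀ t : ℕ, v ((((q : ZMod n)) ^ 2) ^ t * k₀) = γ ^ ((q ^ 2) ^ t) := by
        intro t
        have hex' : ∃ t' : ℕ, (((q : ZMod n)) ^ 2) ^ t' * k₀ = (((q : ZMod n)) ^ 2) ^ t * k₀ :=
          ⟨t, rfl⟩
        rw [hvdef]
        simp only [dif_pos hex']
        exact hγper γ hγ _ _ ((horbeq _ _).mp (Nat.find_spec hex'))
      have hvconj : ∀ j, v (((q : ZMod n)) ^ 2 * j) = v j ^ (q ^ 2) := by
        intro j
        by_cases h : ∃ t : ℕ, (((q : ZMod n)) ^ 2) ^ t * k₀ = j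
        · obtain ⟨t, rfl⟩ := h
          have h1 : ((q : ZMod n)) ^ 2 * ((((q : ZMod n)) ^ 2) ^ t * k₀)
              = (((q : ZMod n)) ^ 2) ^ (t + 1) * k₀ := by
            rw [pow_succ]; ring
          rw [h1, hvval, hvval, ← pow_mul γ, ← pow_succ (q ^ 2)]
        · have h' : ¬ ∃ t : ℕ, (((q : ZMod n)) ^ 2) ^ t * k₀ = ((q : ZMod n)) ^ 2 * j :=
            fun hc => h (orbit_preimage hco hc)
          rw [hvdef]
          simp only [dif_neg h, dif_neg h']
          rw [zero_pow (by positivity)]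
      obtain ⟨c, hc⟩ := exists_codeword hp he hpe hcard hco hq2 hn0 f α hα v hvconj
      have hcT : c ∈ cyclicCode n f α T := by
        rw [mem_cyclicCode]
        intro j hj
        have hnex : ¬ ∃ t : ℕ, (((q : ZMod n)) ^ 2) ^ t * k₀ = j := by
          rintro ⟨t, rfl⟩
          exact orbit_not_mem hco hT hk₀' t hj
        rw [hc, hvdef]
        simp only [dif_neg hnex]
      have h0 : ∑ i : ZMod n, u i * c i ^ q = 0 := hu c hcT
      have hP := parseval hp he hpe hcard hco f α hα u c
      rw [h0, map_zero, mul_zero] at hP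
      set O : Finset (ZMod n) :=
        Finset.image (fun t : ℕ => (((q : ZMod n)) ^ 2) ^ t * k₀) (Finset.range r) with hO
      have hOzero : ∀ k ∈ Finset.univ, k ∉ O →
          dft f α u (-(q : ZMod n) * k) * (dft f α c k) ^ q = 0 := by
        intro k _ hkO
        have hnex : ¬ ∃ t : ℕ, (((q : ZMod n)) ^ 2) ^ t * k₀ = k := by
          rintro ⟨t, ht⟩
          apply hkO
          rw [hO]
          refine Finset.mem_image.mpr ⟨t % r, Finset.mem_range.mpr (Nat.mod_lt t hr0), ?_⟩
          rw [← ht]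
          exact (horbeq _ _).mpr (Nat.mod_modEq t r)
        rw [hc k, hvdef]
        simp only [dif_neg hnex]
        rw [zero_pow hq0, mul_zero]
      have hOsum : ∑ k ∈ O, dft f α u (-(q : ZMod n) * k) * (dft f α c k) ^ q = 0 := by
        rw [Finset.sum_subset (Finset.subset_univ O) hOzero]
        exact hP
      have hinjO : ∀ t ∈ Finset.range r, ∀ t' ∈ Finset.range r,
          (((q : ZMod n)) ^ 2) ^ t * k₀ = (((q : ZMod n)) ^ 2) ^ t' * k₀ → t = t' := by
        intro t ht t' ht' heq
        have h1 : t % r = t' % r := (horbeq t t').mp heq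
        rwa [Nat.mod_eq_of_lt (Finset.mem_range.mp ht),
          Nat.mod_eq_of_lt (Finset.mem_range.mp ht')] at h1
      rw [hO, Finset.sum_image hinjO] at hOsum
      have hterm : ∀ t ∈ Finset.range r,
          dft f α u (-(q : ZMod n) * ((((q : ZMod n)) ^ 2) ^ t * k₀))
            * (dft f α c ((((q : ZMod n)) ^ 2) ^ t * k₀)) ^ q
          = (dft f α u (-(q : ZMod n) * k₀)) ^ ((q ^ 2) ^ t) * (γ ^ q) ^ ((q ^ 2) ^ t) := by
        intro t _
        rw [hc, hvval]
        have hcomm : -(q : ZMod n) * ((((q : ZMod n)) ^ 2) ^ t * k₀)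
            = (((q : ZMod n)) ^ 2) ^ t * (-(q : ZMod n) * k₀) := by ring
        rw [hcomm, dft_conj_pow hp he hpe hcard f α hα]
        congr 1
        rw [← pow_mul γ, ← pow_mul γ, mul_comm]
      rw [Finset.sum_congr rfl hterm] at hOsum
      exact hOsum
    have hinjq : Function.Injective (fun y : E => y ^ q) := by
      intro a b hab
      have hq' : ∀ y : E, y ^ q = iterateFrobenius E p e y := by
        intro y
        rw [iterateFrobenius_def, hpe]
      apply (iterateFrobenius E p e).injective
      simp only at hab
      rw [← hq' a, ← hq' b]
      exact hab
    exact poly_vanish (by nlinarith) hr0 (dft f α u (-(q : ZMod n) * k₀)) K hKcard hinjq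
      (fun γ hγ => hsum0 γ (hKfix γ hγ))
  · -- easy direction
    intro u hu
    intro c hcmem
    have hP := parseval hp he hpe hcard hco f α hα u c
    have hzero : ∑ k : ZMod n, dft f α u (-(q : ZMod n) * k) * (dft f α c k) ^ q = 0 := by
      apply Finset.sum_eq_zero
      intro k _
      by_cases hk : k ∈ T
      · rw [(mem_cyclicCode f α).mp hcmem k hk, zero_pow hq0, mul_zero]
      · rw [(mem_cyclicCode f α).mp hu (-(q : ZMod n) * k) ⟨k, hk, rfl⟩, zero_mul]
    rw [hzero] at hP
    have h1 : f (∑ i : ZMod n, u i * c i ^ q) = 0 := by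
      rcases mul_eq_zero.mp hP.symm with h | h
      · exact absurd h hn0
      · exact h
    exact f.injective (by rw [h1, map_zero] : f _ = f 0)

end Main

end Duadic

theorem stmt_17 (n q : ℕ) [NeZero n] (hn : Odd n) (hq : IsPrimePow q)
    {F E : Type*} [Field F] [Fintype F] [Field E]
    (hcard : Fintype.card F = q ^ 2) (hco : Nat.Coprime n q)
    (f : F →+* E) (α : E) (hα : orderOf α = n)
    (S₀ S₁ : Set (ZMod n)) (a : (ZMod n)ˣ)
    (hdisj : S₀ ∩ S₁ = ∅)
    (hunion : S₀ ∪ S₁ = {x : ZMod n | x ≠ 0})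
    (hc0 : (fun x => ((q : ZMod n)) ^ 2 * x) '' S₀ = S₀)
    (hc1 : (fun x => ((q : ZMod n)) ^ 2 * x) '' S₁ = S₁)
    (ha0 : (fun x => (a : ZMod n) * x) '' S₀ = S₁)
    (ha1 : (fun x => (a : ZMod n) * x) '' S₁ = S₀) :
    (hermDual n q (cyclicCode n f α (S₀ ∪ {0})) = cyclicCode n f α S₀ ∧
        hermDual n q (cyclicCode n f α (S₁ ∪ {0})) = cyclicCode n f α S₁) ↔
      ((fun x => -(q : ZMod n) * x) '' S₀ = S₁ ∧
        (fun x => -(q : ZMod n) * x) '' S₁ = S₀) := by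
  classical
  have hq2 : 2 ≤ q := hq.two_le
  obtain ⟨p, e, hpp, he, hpe⟩ := hq
  have hp : p.Prime := hpp.nat_prime
  haveI hF : CharP F p := Duadic.charF hp he hpe hcard
  haveI hE : CharP E p := charP_of_injective_ringHom f.injective p
  have hn0 : (n : E) ≠ 0 := by
    intro h
    rw [CharP.cast_eq_zero_iff E p] at h
    have hpq : p ∣ q := by rw [← hpe]; exact dvd_pow_self p he.ne'
    have hdg : p ∣ Nat.gcd n q := Nat.dvd_gcd h hpq
    have h1 : p ∣ 1 := hco ▸ hdg
    exact hp.one_lt.ne' (Nat.dvd_one.mp h1)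
  have h0S0 : (0 : ZMod n) ∉ S₀ := by
    intro h0
    have := hunion ▸ (Set.mem_union_left S₁ h0)
    exact this rfl
  have h0S1 : (0 : ZMod n) ∉ S₁ := by
    intro h0
    have := hunion ▸ (Set.mem_union_right S₀ h0)
    exact this rfl
  have hdisj' : ∀ x : ZMod n, x ∈ S₀ → x ∈ S₁ → False := by
    intro x hx0 hx1
    have : x ∈ S₀ ∩ S₁ := ⟨hx0, hx1⟩
    rw [hdisj] at this
    exact this
  have hcompl0 : (S₀ ∪ {0})ᶜ = S₁ := by
    ext x
    simp only [Set.mem_compl_iff, Set.mem_union, Set.mem_singleton_iff, not_or]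
    constructor
    · rintro ⟨hx0, hxne⟩
      have hxu : x ∈ S₀ ∪ S₁ := by
        rw [hunion]; exact hxne
      rcases hxu with h | h
      · exact absurd h hx0
      · exact h
    · intro hx1
      refine ⟨fun h => hdisj' x h hx1, fun h => h0S1 (h ▸ hx1)⟩
  have hcompl1 : (S₁ ∪ {0})ᶜ = S₀ := by
    ext x
    simp only [Set.mem_compl_iff, Set.mem_union, Set.mem_singleton_iff, not_or]
    constructor
    · rintro ⟨hx1, hxne⟩
      have hxu : x ∈ S₀ ∪ S₁ := by
        rw [hunion]; exact hxne
      rcases hxu with h | h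
      · exact h
      · exact absurd h hx1
    · intro hx0
      refine ⟨fun h => hdisj' x hx0 h, fun h => h0S0 (h ▸ hx0)⟩
  have hQT0 : (fun x => ((q : ZMod n)) ^ 2 * x) '' (S₀ ∪ {0}) = S₀ ∪ {0} := by
    rw [Set.image_union, hc0, Set.image_singleton, mul_zero]
  have hQT1 : (fun x => ((q : ZMod n)) ^ 2 * x) '' (S₁ ∪ {0}) = S₁ ∪ {0} := by
    rw [Set.image_union, hc1, Set.image_singleton, mul_zero]
  rw [Duadic.dual_eq hp he hpe hcard hco hq2 hn0 f α hα _ hQT0, hcompl0,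
      Duadic.dual_eq hp he hpe hcard hco hq2 hn0 f α hα _ hQT1, hcompl1]
  have hQneg : ∀ S : Set (ZMod n), (fun x => ((q : ZMod n)) ^ 2 * x) '' S = S →
      (fun x => ((q : ZMod n)) ^ 2 * x) '' ((fun x => -(q : ZMod n) * x) '' S)
        = (fun x => -(q : ZMod n) * x) '' S := by
    intro S hS
    rw [Set.image_image]
    have h1 : (fun x => ((q : ZMod n)) ^ 2 * (-(q : ZMod n) * x))
        = (fun x => -(q : ZMod n) * (((q : ZMod n)) ^ 2 * x)) := by
      funext x; ring
    rw [h1, ← Set.image_image, hS]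
  constructor
  · rintro ⟨h1, h2⟩
    constructor
    · exact Duadic.code_inj hp he hpe hcard hco hq2 hn0 f α hα (hQneg S₀ hc0) hc1 h2
    · exact Duadic.code_inj hp he hpe hcard hco hq2 hn0 f α hα (hQneg S₁ hc1) hc0 h1
  · rintro ⟨h1, h2⟩
    exact ⟨by rw [h2], by rw [h1]⟩
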